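/- arXiv:2106.15022 — 6 statements merged into one kernel-verified Lean document; each statement's English description precedes it below -/
import Mathlib

section
/- Let X and Y be normed spaces and let (f^t)_{t≥0} be a family of positively homogeneous maps X → Y such that for each t, ‖f^t(x)−f^t(y)‖ ≤ K·max{‖x−y‖, e^{−2t}‖x‖, e^{−2t}‖y‖} for all x, y, and such that sup_{‖x‖≤1} ‖f^t(x)−f^s(x)‖ ≤ K|t−s| for all t, s ≥ 0. Define F : X → Y by F(x) = f^0(x) if ‖x‖ ≤ 1 and F(x) = f^{log‖x‖}(x) if ‖x‖ > 1. Then F satisfies ‖F(x)−F(z)‖ ≤ 2K‖x−z‖ + K for all x, z ∈ X. -/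
theorem stmt2 {X Y : Type*} [NormedAddCommGroup X] [NormedSpace ℝ X]
    [NormedAddCommGroup Y] [NormedSpace ℝ Y]
    (K : ℝ) (hK : 0 < K) (f : ℝ → X → Y)
    (hhom : ∀ t ≥ (0:ℝ), ∀ (α : ℝ), 0 ≤ α → ∀ x, f t (α • x) = α • f t x)
    (hlip : ∀ t ≥ (0:ℝ), ∀ x y, ‖f t x - f t y‖ ≤
      K * max ‖x - y‖ (max (Real.exp (-2*t) * ‖x‖) (Real.exp (-2*t) * ‖y‖)))
    (hvar : ∀ t ≥ (0:ℝ), ∀ s ≥ (0:ℝ), ∀ x : X, ‖x‖ ≤ 1 → ‖f t x - f s x‖ ≤ K * |t - s|)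
    (F : X → Y)
    (hF : ∀ x, F x = if ‖x‖ ≤ 1 then f 0 x else f (Real.log ‖x‖) x) :
    ∀ x z, ‖F x - F z‖ ≤ 2 * K * ‖x - z‖ + K := by
  have key : ∀ x z : X, ‖z‖ ≤ ‖x‖ → ‖F x - F z‖ ≤ 2 * K * ‖x - z‖ + K := by
    intro x z hzx
    have hKxz : 0 ≤ K * ‖x - z‖ := mul_nonneg hK.le (norm_nonneg _)
    by_cases hx : ‖x‖ ≤ 1
    · -- both ≤ 1
      have hz : ‖z‖ ≤ 1 := hzx.trans hx
      rw [hF x, hF z, if_pos hx, if_pos hz]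
      have h := hlip 0 le_rfl x z
      have e0 : Real.exp (-2*0) = 1 := by norm_num
      rw [e0, one_mul, one_mul] at h
      have hm : max ‖x - z‖ (max ‖x‖ ‖z‖) ≤ ‖x - z‖ + 1 := by
        apply max_le (by linarith [norm_nonneg (x - z)])
        apply max_le <;> linarith [norm_nonneg (x - z)]
      calc ‖f 0 x - f 0 z‖ ≤ K * (‖x - z‖ + 1) :=
            h.trans (by nlinarith)
        _ ≤ 2 * K * ‖x - z‖ + K := by nlinarith
    · push_neg at hx
      have hxpos : (0:ℝ) < ‖x‖ := lt_trans one_pos hx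
      set t := Real.log ‖x‖ with ht
      have ht0 : 0 ≤ t := Real.log_nonneg hx.le
      have hxexp : ‖x‖ = Real.exp t := (Real.exp_log hxpos).symm
      have he1 : Real.exp (-2*t) * ‖x‖ ≤ 1 := by
        rw [hxexp, ← Real.exp_add]
        apply Real.exp_le_one_iff.mpr
        linarith
      have he2 : Real.exp (-2*t) * ‖z‖ ≤ 1 := by
        refine le_trans ?_ he1
        exact mul_le_mul_of_nonneg_left hzx (Real.exp_pos _).le
      have term1 : ‖f t x - f t z‖ ≤ K * ‖x - z‖ + K := by
        have h := hlip t ht0 x z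
        have hm : max ‖x - z‖ (max (Real.exp (-2*t) * ‖x‖) (Real.exp (-2*t) * ‖z‖))
            ≤ ‖x - z‖ + 1 := by
          apply max_le (by linarith [norm_nonneg (x - z)])
          apply max_le <;> linarith [norm_nonneg (x - z)]
        calc ‖f t x - f t z‖ ≤ K * (‖x - z‖ + 1) := h.trans (by nlinarith)
          _ = K * ‖x - z‖ + K := by ring
      have hnn : ‖x‖ - ‖z‖ ≤ ‖x - z‖ := norm_sub_norm_le x z
      have hFx : F x = f t x := by rw [hF x, if_neg (not_le.mpr hx)]
      by_cases hz : ‖z‖ ≤ 1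
      · -- F z = f 0 z
        have hFz : F z = f 0 z := by rw [hF z, if_pos hz]
        have term2 : ‖f t z - f 0 z‖ ≤ K * ‖x - z‖ := by
          have h := hvar t ht0 0 le_rfl z hz
          have habs : |t - 0| = t := by rw [sub_zero, abs_of_nonneg ht0]
          rw [habs] at h
          have hlog : t ≤ ‖x‖ - 1 := Real.log_le_sub_one_of_pos hxpos
          have : t ≤ ‖x - z‖ := by linarith
          calc ‖f t z - f 0 z‖ ≤ K * t := h
            _ ≤ K * ‖x - z‖ := mul_le_mul_of_nonneg_left this hK.le
        calc ‖F x - F z‖ = ‖(f t x - f t z) + (f t z - f 0 z)‖ := by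
              rw [hFx, hFz, sub_add_sub_cancel]
          _ ≤ ‖f t x - f t z‖ + ‖f t z - f 0 z‖ := norm_add_le _ _
          _ ≤ (K * ‖x - z‖ + K) + K * ‖x - z‖ := add_le_add term1 term2
          _ = 2 * K * ‖x - z‖ + K := by ring
      · push_neg at hz
        have hzpos : (0:ℝ) < ‖z‖ := lt_trans one_pos hz
        set s := Real.log ‖z‖ with hs
        have hs0 : 0 ≤ s := Real.log_nonneg hz.le
        have hFz : F z = f s z := by rw [hF z, if_neg (not_le.mpr hz)]
        have term2 : ‖f t z - f s z‖ ≤ K * ‖x - z‖ := by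
          set u := ‖z‖⁻¹ • z with hu
          have hzu : z = ‖z‖ • u := by
            rw [hu, smul_smul, mul_inv_cancel₀ (ne_of_gt hzpos), one_smul]
          have hnu : ‖u‖ ≤ 1 := by
            rw [hu, norm_smul, norm_inv, norm_norm,
              inv_mul_cancel₀ (ne_of_gt hzpos)]
          have h1 := hhom t ht0 ‖z‖ (norm_nonneg z) u
          have h2 := hhom s hs0 ‖z‖ (norm_nonneg z) u
          rw [← hzu] at h1 h2
          have h3 : ‖f t u - f s u‖ ≤ K * |t - s| := hvar t ht0 s hs0 u hnu
          have hts : |t - s| = t - s := by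
            rw [abs_of_nonneg]
            exact sub_nonneg.mpr (Real.log_le_log hzpos hzx)
          have hlog : Real.log (‖x‖ / ‖z‖) ≤ ‖x‖ / ‖z‖ - 1 :=
            Real.log_le_sub_one_of_pos (div_pos hxpos hzpos)
          have hlogd : Real.log (‖x‖ / ‖z‖) = t - s :=
            Real.log_div (ne_of_gt hxpos) (ne_of_gt hzpos)
          have hzt : ‖z‖ * (t - s) ≤ ‖x‖ - ‖z‖ := by
            have := mul_le_mul_of_nonneg_left hlog hzpos.le
            rw [hlogd] at this
            calc ‖z‖ * (t - s) ≤ ‖z‖ * (‖x‖ / ‖z‖ - 1) := this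
              _ = ‖x‖ - ‖z‖ := by field_simp
          calc ‖f t z - f s z‖ = ‖z‖ * ‖f t u - f s u‖ := by
                rw [h1, h2, ← smul_sub, norm_smul, Real.norm_eq_abs,
                  abs_of_nonneg hzpos.le]
            _ ≤ ‖z‖ * (K * |t - s|) :=
                mul_le_mul_of_nonneg_left h3 hzpos.le
            _ = K * (‖z‖ * (t - s)) := by rw [hts]; ring
            _ ≤ K * (‖x‖ - ‖z‖) := mul_le_mul_of_nonneg_left hzt hK.le
            _ ≤ K * ‖x - z‖ := mul_le_mul_of_nonneg_left hnn hK.le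
        calc ‖F x - F z‖ = ‖(f t x - f t z) + (f t z - f s z)‖ := by
              rw [hFx, hFz, sub_add_sub_cancel]
          _ ≤ ‖f t x - f t z‖ + ‖f t z - f s z‖ := norm_add_le _ _
          _ ≤ (K * ‖x - z‖ + K) + K * ‖x - z‖ := add_le_add term1 term2
          _ = 2 * K * ‖x - z‖ + K := by ring
  intro x z
  rcases le_total ‖z‖ ‖x‖ with h | h
  · exact key x z h
  · have := key z x h
    rwa [norm_sub_rev (F z), norm_sub_rev z] at this
end

section
/- Let X and Y be normed spaces, Q : Y → X a bounded surjective linear map which is a quotient map (there is δ > 0 with Q(B_Y) ⊇ δ·B_X), and ε > 0. Then there exists a positively homogeneous map f : X → Y which is a section of Q (Q∘f = id_X) and satisfies ‖f(x)−f(y)‖ ≤ max{‖x−y‖, ε‖x‖, ε‖y‖} for all x, y ∈ X, after renorming Y by the equivalent norm ‖y‖_m = max{2^{−m}‖y‖, ‖Q(y)‖} for a suitably large m ∈ ℕ. -/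
theorem stmt3 {X Y : Type*} [NormedAddCommGroup X] [NormedSpace ℝ X]
    [NormedAddCommGroup Y] [NormedSpace ℝ Y]
    (Q : Y →L[ℝ] X) (hsurj : Function.Surjective Q)
    (δ : ℝ) (hδ : 0 < δ)
    (hquot : ∀ x : X, ‖x‖ ≤ δ → ∃ y : Y, Q y = x ∧ ‖y‖ ≤ 1)
    (ε : ℝ) (hε : 0 < ε) :
    ∃ (m : ℕ) (f : X → Y),
      (∀ (α : ℝ), 0 ≤ α → ∀ x, f (α • x) = α • f x) ∧
      (∀ x, Q (f x) = x) ∧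
      (∀ x y, max ((2:ℝ)^(-(m:ℤ)) * ‖f x - f y‖) ‖Q (f x) - Q (f y)‖ ≤
        max ‖x - y‖ (max (ε * ‖x‖) (ε * ‖y‖))) := by
  classical
  -- choose a section g on (at least) the unit sphere with ‖g u‖ ≤ 1/δ
  have key : ∀ u : X, ‖u‖ = 1 → ∃ y : Y, Q y = u ∧ ‖y‖ ≤ 1/δ := by
    intro u hu
    obtain ⟨y, hy, hy1⟩ := hquot (δ • u) (by
      rw [norm_smul, hu, Real.norm_eq_abs, abs_of_pos hδ]; simp)
    refine ⟨δ⁻¹ • y, ?_, ?_⟩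
    · rw [map_smul, hy, smul_smul, inv_mul_cancel₀ hδ.ne', one_smul]
    · rw [norm_smul, Real.norm_eq_abs, abs_of_pos (inv_pos.mpr hδ), one_div]
      calc δ⁻¹ * ‖y‖ ≤ δ⁻¹ * 1 := by
            exact mul_le_mul_of_nonneg_left hy1 (inv_pos.mpr hδ).le
        _ = δ⁻¹ := mul_one _
  -- the section on all of X
  set g : X → Y := fun u =>
    if h : ‖u‖ = 1 then (key u h).choose else 0 with hg
  have hgQ : ∀ u : X, ‖u‖ = 1 → Q (g u) = u := by
    intro u h; simp only [hg, dif_pos h]; exact (key u h).choose_spec.1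
  have hgn : ∀ u : X, ‖u‖ = 1 → ‖g u‖ ≤ 1/δ := by
    intro u h; simp only [hg, dif_pos h]; exact (key u h).choose_spec.2
  set f : X → Y := fun x => if x = 0 then 0 else ‖x‖ • g (‖x‖⁻¹ • x) with hf
  -- pick m with (2:ℝ)^(-m) ≤ ε*δ/2
  obtain ⟨m, hm⟩ := exists_pow_lt_of_lt_one (by positivity : (0:ℝ) < ε * δ / 2)
    (by norm_num : (1:ℝ)/2 < 1)
  have hmle : (2:ℝ)^(-(m:ℤ)) ≤ ε * δ / 2 := by
    have : (2:ℝ)^(-(m:ℤ)) = (1/2)^m := by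
      rw [zpow_neg, zpow_natCast, one_div, inv_pow]
    rw [this]; exact hm.le
  have hQf : ∀ x : X, Q (f x) = x := by
    intro x
    by_cases hx : x = 0
    · simp [hf, hx]
    · have hxn : ‖x‖ ≠ 0 := norm_ne_zero_iff.mpr hx
      have hu : ‖‖x‖⁻¹ • x‖ = 1 := by
        rw [norm_smul, Real.norm_eq_abs, abs_of_nonneg (inv_nonneg.mpr (norm_nonneg x)),
          inv_mul_cancel₀ hxn]
      simp only [hf, if_neg hx, map_smul, hgQ _ hu, smul_smul,
        mul_inv_cancel₀ hxn, one_smul]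
  have hfn : ∀ x : X, ‖f x‖ ≤ ‖x‖ / δ := by
    intro x
    by_cases hx : x = 0
    · simp [hf, hx, norm_nonneg, le_div_iff₀ hδ]
    · have hxn : ‖x‖ ≠ 0 := norm_ne_zero_iff.mpr hx
      have hu : ‖‖x‖⁻¹ • x‖ = 1 := by
        rw [norm_smul, Real.norm_eq_abs, abs_of_nonneg (inv_nonneg.mpr (norm_nonneg x)),
          inv_mul_cancel₀ hxn]
      simp only [hf, if_neg hx, norm_smul, Real.norm_eq_abs, abs_of_nonneg (norm_nonneg x)]
      calc ‖x‖ * ‖g (‖x‖⁻¹ • x)‖ ≤ ‖x‖ * (1/δ) :=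
            mul_le_mul_of_nonneg_left (hgn _ hu) (norm_nonneg x)
        _ = ‖x‖ / δ := by ring
  refine ⟨m, f, ?_, hQf, ?_⟩
  · intro α hα x
    rcases eq_or_lt_of_le hα with h0 | h0
    · simp [hf, ← h0]
    by_cases hx : x = 0
    · simp [hf, hx]
    · have hax : α • x ≠ 0 := smul_ne_zero h0.ne' hx
      have hxn : ‖x‖ ≠ 0 := norm_ne_zero_iff.mpr hx
      have hns : ‖α • x‖ = α * ‖x‖ := by
        rw [norm_smul, Real.norm_eq_abs, abs_of_pos h0]
      have hsc : (α * ‖x‖)⁻¹ * α = ‖x‖⁻¹ := by field_simp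
      simp only [hf, if_neg hax, if_neg hx, hns, smul_smul, hsc]
  · intro x y
    rw [hQf, hQf]
    refine max_le ?_ (le_max_left _ _)
    have h1 : ‖f x - f y‖ ≤ 2 * max ‖x‖ ‖y‖ / δ := by
      calc ‖f x - f y‖ ≤ ‖f x‖ + ‖f y‖ := norm_sub_le _ _
        _ ≤ ‖x‖ / δ + ‖y‖ / δ := add_le_add (hfn x) (hfn y)
        _ ≤ max ‖x‖ ‖y‖ / δ + max ‖x‖ ‖y‖ / δ := add_le_add
            (div_le_div_of_nonneg_right (le_max_left _ _) hδ.le)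
            (div_le_div_of_nonneg_right (le_max_right _ _) hδ.le)
        _ = 2 * max ‖x‖ ‖y‖ / δ := by ring
    have hpos : (0:ℝ) ≤ (2:ℝ)^(-(m:ℤ)) := by positivity
    calc (2:ℝ)^(-(m:ℤ)) * ‖f x - f y‖
        ≤ (ε * δ / 2) * (2 * max ‖x‖ ‖y‖ / δ) := by
          apply mul_le_mul hmle h1 (norm_nonneg _) (by positivity)
      _ = ε * max ‖x‖ ‖y‖ := by field_simp
      _ = max (ε * ‖x‖) (ε * ‖y‖) := by
          rw [mul_max_of_nonneg _ _ hε.le]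
      _ ≤ max ‖x - y‖ (max (ε * ‖x‖) (ε * ‖y‖)) := le_max_right _ _
end

section
/- Let E be a Banach space isomorphic to ℓ₂ and suppose E is a complemented subspace of ℓ∞ (i.e., there is a bounded linear projection of ℓ∞ onto E). Then a contradiction follows; in other words, ℓ∞ contains no complemented subspace isomorphic to ℓ₂. -/
set_option linter.unusedSectionVars false
open scoped ENNReal
set_option maxHeartbeats 1000000

noncomputable section
namespace Stmt7Aux

def sg (b : Bool) : ℝ := if b then 1 else -1

lemma abs_sg (b : Bool) : |sg b| = 1 := by cases b <;> simp [sg]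

lemma sg_not (b : Bool) : sg (!b) = - sg b := by cases b <;> simp [sg]

variable {ι : Type*} [Fintype ι] [DecidableEq ι]

def flp (i : ι) (ω : ι → Bool) : ι → Bool := Function.update ω i (!(ω i))

lemma flp_flp (i : ι) (ω : ι → Bool) : flp i (flp i ω) = ω := by
  funext j
  by_cases h : j = i
  · subst h; simp [flp]
  · simp [flp, Function.update_of_ne h]

lemma flp_apply_self (i : ι) (ω : ι → Bool) : flp i ω i = !(ω i) := by simp [flp]

lemma flp_apply_ne (i : ι) (ω : ι → Bool) {j : ι} (h : j ≠ i) : flp i ω j = ω j := by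
  simp [flp, Function.update_of_ne h]

lemma sum_flp {M : Type*} [AddCommMonoid M] (i : ι) (F : (ι → Bool) → M) :
    ∑ ω : ι → Bool, F (flp i ω) = ∑ ω : ι → Bool, F ω :=
  Fintype.sum_bijective (flp i)
    (Function.bijective_iff_has_inverse.2 ⟨flp i, fun ω => flp_flp i ω, fun ω => flp_flp i ω⟩)
    _ _ (fun _ => rfl)

variable {F : Type*} [NormedAddCommGroup F] [InnerProductSpace ℝ F]

local notation "⟪" x ", " y "⟫" => @inner ℝ _ _ x y

/-- second moment identity, vector-valued -/
lemma sum_sq_norm (s : Finset ι) (v : ι → F) :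
    ∑ ω : ι → Bool, ‖∑ i ∈ s, sg (ω i) • v i‖ ^ 2
      = 2 ^ (Fintype.card ι) * ∑ i ∈ s, ‖v i‖ ^ 2 := by
  classical
  induction s using Finset.induction_on with
  | empty => simp
  | @insert i s hi ih =>
    have key : ∀ ω : ι → Bool,
        ‖∑ j ∈ insert i s, sg (ω j) • v j‖ ^ 2
          + ‖∑ j ∈ insert i s, sg (flp i ω j) • v j‖ ^ 2
        = 2 * ‖v i‖ ^ 2 + 2 * ‖∑ j ∈ s, sg (ω j) • v j‖ ^ 2 := by
      intro ω
      have hW : ∑ j ∈ s, sg (flp i ω j) • v j = ∑ j ∈ s, sg (ω j) • v j := by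
        refine Finset.sum_congr rfl fun j hj => ?_
        rw [flp_apply_ne i ω (by rintro rfl; exact hi hj)]
      rw [Finset.sum_insert hi, Finset.sum_insert hi, hW, flp_apply_self, sg_not, neg_smul]
      set a := sg (ω i) • v i
      set W := ∑ j ∈ s, sg (ω j) • v j
      have hpar := parallelogram_law_with_norm ℝ W a
      have h1 : ‖a + W‖ = ‖W + a‖ := by rw [add_comm]
      have h2 : (-a + W) = W - a := by abel
      have ha : ‖a‖ = ‖v i‖ := by
        rw [norm_smul, Real.norm_eq_abs, abs_sg, one_mul]
      rw [h1, h2, ← ha]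
      nlinarith [hpar]
    have h2 : (2:ℝ) * ∑ ω : ι → Bool, ‖∑ j ∈ insert i s, sg (ω j) • v j‖ ^ 2
        = ∑ ω : ι → Bool, (2 * ‖v i‖ ^ 2 + 2 * ‖∑ j ∈ s, sg (ω j) • v j‖ ^ 2) := by
      have hfl := sum_flp (i := i) (F := fun ω => ‖∑ j ∈ insert i s, sg (ω j) • v j‖ ^ 2)
      have e0 : ∑ ω : ι → Bool, (‖∑ j ∈ insert i s, sg (ω j) • v j‖ ^ 2
            + ‖∑ j ∈ insert i s, sg (flp i ω j) • v j‖ ^ 2)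
          = 2 * ∑ ω : ι → Bool, ‖∑ j ∈ insert i s, sg (ω j) • v j‖ ^ 2 := by
        rw [Finset.sum_add_distrib, hfl]; ring
      rw [← e0]
      exact Finset.sum_congr rfl fun ω _ => key ω
    have hcard : (Finset.univ : Finset (ι → Bool)).card = 2 ^ (Fintype.card ι) := by
      simp [Fintype.card_fun]
    rw [Finset.sum_insert hi]
    have hexp : ∑ ω : ι → Bool, (2 * ‖v i‖ ^ 2 + 2 * ‖∑ j ∈ s, sg (ω j) • v j‖ ^ 2)
        = 2 ^ (Fintype.card ι) * (2 * ‖v i‖ ^ 2)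
          + 2 * (2 ^ (Fintype.card ι) * ∑ j ∈ s, ‖v j‖ ^ 2) := by
      rw [Finset.sum_add_distrib, Finset.sum_const, ← Finset.mul_sum, ih, hcard, nsmul_eq_mul]
      push_cast; ring
    rw [hexp] at h2
    linarith

/-- second moment identity, scalar -/
lemma sum_sq (s : Finset ι) (a : ι → ℝ) :
    ∑ ω : ι → Bool, (∑ i ∈ s, sg (ω i) * a i) ^ 2
      = 2 ^ (Fintype.card ι) * ∑ i ∈ s, (a i) ^ 2 := by
  have := sum_sq_norm (F := ℝ) s a
  simpa [Real.norm_eq_abs, sq_abs, smul_eq_mul] using this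

/-- fourth moment inequality -/
lemma sum_fourth (s : Finset ι) (a : ι → ℝ) :
    ∑ ω : ι → Bool, (∑ i ∈ s, sg (ω i) * a i) ^ 4
      ≤ 3 * 2 ^ (Fintype.card ι) * (∑ i ∈ s, (a i) ^ 2) ^ 2 := by
  classical
  induction s using Finset.induction_on with
  | empty => simp
  | @insert i s hi ih =>
    have key : ∀ ω : ι → Bool,
        (∑ j ∈ insert i s, sg (ω j) * a j) ^ 4
          + (∑ j ∈ insert i s, sg (flp i ω j) * a j) ^ 4
        = 2 * (∑ j ∈ s, sg (ω j) * a j) ^ 4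
          + 12 * (a i) ^ 2 * (∑ j ∈ s, sg (ω j) * a j) ^ 2 + 2 * (a i) ^ 4 := by
      intro ω
      have hW : ∑ j ∈ s, sg (flp i ω j) * a j = ∑ j ∈ s, sg (ω j) * a j := by
        refine Finset.sum_congr rfl fun j hj => ?_
        rw [flp_apply_ne i ω (by rintro rfl; exact hi hj)]
      rw [Finset.sum_insert hi, Finset.sum_insert hi, hW, flp_apply_self, sg_not]
      cases h : ω i <;> simp only [sg, if_true, if_false, Bool.false_eq_true] <;> ring
    have hfl := sum_flp (i := i) (F := fun ω => (∑ j ∈ insert i s, sg (ω j) * a j) ^ 4)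
    have h2 : (2:ℝ) * ∑ ω : ι → Bool, (∑ j ∈ insert i s, sg (ω j) * a j) ^ 4
        = ∑ ω : ι → Bool, (2 * (∑ j ∈ s, sg (ω j) * a j) ^ 4
          + 12 * (a i) ^ 2 * (∑ j ∈ s, sg (ω j) * a j) ^ 2 + 2 * (a i) ^ 4) := by
      have e0 : ∑ ω : ι → Bool, ((∑ j ∈ insert i s, sg (ω j) * a j) ^ 4
            + (∑ j ∈ insert i s, sg (flp i ω j) * a j) ^ 4)
          = 2 * ∑ ω : ι → Bool, (∑ j ∈ insert i s, sg (ω j) * a j) ^ 4 := by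
        rw [Finset.sum_add_distrib, hfl]; ring
      rw [← e0]
      exact Finset.sum_congr rfl fun ω _ => key ω
    have hcard : (Finset.univ : Finset (ι → Bool)).card = 2 ^ (Fintype.card ι) := by
      simp [Fintype.card_fun]
    have hexp : ∑ ω : ι → Bool, (2 * (∑ j ∈ s, sg (ω j) * a j) ^ 4
          + 12 * (a i) ^ 2 * (∑ j ∈ s, sg (ω j) * a j) ^ 2 + 2 * (a i) ^ 4)
        = 2 * ∑ ω : ι → Bool, (∑ j ∈ s, sg (ω j) * a j) ^ 4
          + 12 * (a i) ^ 2 * (2 ^ (Fintype.card ι) * ∑ j ∈ s, (a j) ^ 2)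
          + 2 ^ (Fintype.card ι) * (2 * (a i) ^ 4) := by
      rw [Finset.sum_add_distrib, Finset.sum_add_distrib, ← Finset.mul_sum, ← Finset.mul_sum,
        sum_sq, Finset.sum_const, hcard, nsmul_eq_mul]
      push_cast; ring
    rw [hexp] at h2
    rw [Finset.sum_insert hi]
    have hs2 : (0:ℝ) ≤ ∑ j ∈ s, (a j) ^ 2 := Finset.sum_nonneg fun j _ => sq_nonneg _
    have hpow : (0:ℝ) ≤ 2 ^ (Fintype.card ι) := by positivity
    have h4 : (0:ℝ) ≤ (a i) ^ 4 := by positivity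
    nlinarith [ih, sq_nonneg (a i), mul_nonneg hpow h4, mul_nonneg (mul_nonneg hpow (sq_nonneg (a i))) hs2]

section Linfty

abbrev LL := lp (fun _ : ℕ => ℝ) (⊤ : ℝ≥0∞)
abbrev HH := lp (fun _ : ℕ => ℝ) 2

variable {Q : Type*} [Fintype Q]

lemma memℓp_comp (c : ℕ → Q) (x : Q → ℝ) : Memℓp (fun p => x (c p)) (⊤ : ℝ≥0∞) := by
  apply memℓp_infty
  apply BddAbove.mono _ ((Set.finite_range (fun q => ‖x q‖)).bddAbove)
  rintro - ⟨p, rfl⟩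
  exact ⟨c p, rfl⟩

/-- embedding of partition-measurable bounded functions into ℓ∞ -/
def iotaL (c : ℕ → Q) : (Q → ℝ) →ₗ[ℝ] LL where
  toFun x := ⟨fun p => x (c p), memℓp_comp c x⟩
  map_add' x y := by ext p; rfl
  map_smul' a x := by ext p; rfl

@[simp] lemma iotaL_apply (c : ℕ → Q) (x : Q → ℝ) (p : ℕ) : (iotaL c x : ℕ → ℝ) p = x (c p) :=
  rfl

lemma norm_iotaL_le (c : ℕ → Q) (x : Q → ℝ) {r : ℝ} (hr : 0 ≤ r)
    (h : ∀ p, |x (c p)| ≤ r) : ‖iotaL c x‖ ≤ r :=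
  lp.norm_le_of_forall_le hr fun p => by simpa [Real.norm_eq_abs] using h p

lemma norm_iotaL_sq_le (c : ℕ → Q) (x : Q → ℝ) : ‖iotaL c x‖ ^ 2 ≤ ∑ q, (x q) ^ 2 := by
  have h0 : (0:ℝ) ≤ ∑ q, (x q) ^ 2 := Finset.sum_nonneg fun q _ => sq_nonneg _
  have h1 : ‖iotaL c x‖ ≤ Real.sqrt (∑ q, (x q) ^ 2) := by
    apply norm_iotaL_le c x (Real.sqrt_nonneg _)
    intro p
    rw [← Real.sqrt_sq_eq_abs]
    apply Real.sqrt_le_sqrt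
    exact Finset.single_le_sum (f := fun q => (x q)^2) (fun q _ => sq_nonneg _) (Finset.mem_univ _)
  calc ‖iotaL c x‖ ^ 2 ≤ Real.sqrt (∑ q, (x q) ^ 2) ^ 2 := by
        apply sq_le_sq' _ h1
        nlinarith [norm_nonneg (iotaL c x), Real.sqrt_nonneg (∑ q, (x q) ^ 2)]
    _ = ∑ q, (x q) ^ 2 := Real.sq_sqrt h0

/-- clamp to `[-M, M]` -/
def clamp (M t : ℝ) : ℝ := max (-M) (min M t)

lemma abs_clamp_le {M : ℝ} (hM : 0 ≤ M) (t : ℝ) : |clamp M t| ≤ M := by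
  rw [abs_le]
  constructor
  · exact le_max_left _ _
  · exact max_le (by linarith) (min_le_left _ _)

lemma clamp_zero {M : ℝ} (hM : 0 ≤ M) : clamp M 0 = 0 := by
  simp [clamp, min_eq_right hM, max_eq_right (neg_nonpos.2 hM)]

lemma sq_sub_clamp_le {M : ℝ} (hM : 0 ≤ M) (t : ℝ) :
    (t - clamp M t) ^ 2 * M ^ 2 ≤ t ^ 4 := by
  rcases le_total t M with h1 | h1
  · rcases le_total (-M) t with h2 | h2
    · have : clamp M t = t := by
        rw [clamp, min_eq_right h1, max_eq_right h2]
      rw [this]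
      simp
      positivity
    · have : clamp M t = -M := by
        rw [clamp, max_eq_left]
        exact le_trans (min_le_right _ _) h2
      rw [this]
      have ha : (0:ℝ) ≤ -t - M := by linarith
      have hb : (-t - M) * M ≤ (-t) * (-t) := by nlinarith
      nlinarith [hb, mul_nonneg ha hM]
  · have : clamp M t = M := by
      rw [clamp, min_eq_left h1, max_eq_right (by linarith)]
    rw [this]
    have ha : (0:ℝ) ≤ t - M := by linarith
    have hb : (t - M) * M ≤ t * t := by nlinarith
    nlinarith [hb, mul_nonneg ha hM]

end Linfty

section Key

variable {Q : Type*} [Fintype Q]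

/-- values of admissible families -/
def famSet (c : ℕ → Q) (T : LL →L[ℝ] HH) : Set ℝ :=
  {r | ∃ (k : ℕ) (x : Fin k → Q → ℝ),
    (∀ p, ∑ i, (x i (c p)) ^ 2 ≤ 1) ∧
    (∀ i q, (∀ p, c p ≠ q) → x i q = 0) ∧
    r = ∑ i, ‖T (iotaL c (x i))‖ ^ 2}

lemma zero_mem_famSet (c : ℕ → Q) (T : LL →L[ℝ] HH) : (0:ℝ) ∈ famSet c T :=
  ⟨0, fun _ => 0, by simp, by simp, by simp⟩

lemma bddAbove_famSet (c : ℕ → Q) (T : LL →L[ℝ] HH) : BddAbove (famSet c T) := by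
  classical
  refine ⟨‖T‖ ^ 2 * Fintype.card Q, ?_⟩
  rintro r ⟨k, x, hx1, hx0, rfl⟩
  calc ∑ i, ‖T (iotaL c (x i))‖ ^ 2
      ≤ ∑ i, ‖T‖ ^ 2 * ∑ q, (x i q) ^ 2 := by
        refine Finset.sum_le_sum fun i _ => ?_
        have h1 : ‖T (iotaL c (x i))‖ ^ 2 ≤ (‖T‖ * ‖iotaL c (x i)‖) ^ 2 := by
          have := T.le_opNorm (iotaL c (x i))
          nlinarith [norm_nonneg (T (iotaL c (x i)))]
        refine le_trans h1 ?_
        rw [mul_pow]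
        have := norm_iotaL_sq_le c (x i)
        nlinarith [sq_nonneg ‖T‖]
    _ = ‖T‖ ^ 2 * ∑ q, ∑ i, (x i q) ^ 2 := by
        rw [← Finset.mul_sum, Finset.sum_comm]
    _ ≤ ‖T‖ ^ 2 * Fintype.card Q := by
        have hq : ∀ q : Q, ∑ i, (x i q) ^ 2 ≤ 1 := by
          intro q
          by_cases hq : ∃ p, c p = q
          · obtain ⟨p, rfl⟩ := hq
            exact hx1 p
          · push_neg at hq
            have : ∀ i : Fin k, x i q = 0 := fun i => hx0 i q hq
            simp [this]
        have : ∑ q : Q, ∑ i, (x i q) ^ 2 ≤ ∑ _q : Q, (1:ℝ) :=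
          Finset.sum_le_sum fun q _ => hq q
        have hcard : ∑ _q : Q, (1:ℝ) = Fintype.card Q := by simp
        nlinarith [sq_nonneg ‖T‖, this, hcard.le, hcard.ge]

lemma key (c : ℕ → Q) (T : LL →L[ℝ] HH) {k : ℕ} (x : Fin k → Q → ℝ)
    (hx1 : ∀ p, ∑ i, (x i (c p)) ^ 2 ≤ 1)
    (hx0 : ∀ i q, (∀ p, c p ≠ q) → x i q = 0) :
    ∑ i, ‖T (iotaL c (x i))‖ ^ 2 ≤ 48 * ‖T‖ ^ 2 := by
  classical
  set S := famSet c T with hSdef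
  have h0S : (0:ℝ) ∈ S := zero_mem_famSet c T
  have hbdd : BddAbove S := bddAbove_famSet c T
  have hsup0 : 0 ≤ sSup S := le_csSup hbdd h0S
  have hmem : ∀ r ∈ S, r ≤ 24 * ‖T‖ ^ 2 + sSup S / 2 := by
    rintro r ⟨n, u, hu1, hu0, rfl⟩
    set M : ℝ := Real.sqrt 12 with hMdef
    have hM0 : 0 ≤ M := Real.sqrt_nonneg _
    have hM2 : M ^ 2 = 12 := Real.sq_sqrt (by norm_num)
    set z : (Fin n → Bool) → Q → ℝ := fun ω => ∑ i, sg (ω i) • u i with hzdef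
    have hzq : ∀ ω q, z ω q = ∑ i, sg (ω i) * u i q := by
      intro ω q
      simp [hzdef, Finset.sum_apply, smul_eq_mul]
    have hTz : ∀ ω, T (iotaL c (z ω)) = ∑ i, sg (ω i) • T (iotaL c (u i)) := by
      intro ω
      rw [hzdef]
      simp [map_sum, map_smul]
    have A1 : ∑ ω : Fin n → Bool, ‖T (iotaL c (z ω))‖ ^ 2
        = 2 ^ n * ∑ i, ‖T (iotaL c (u i))‖ ^ 2 := by
      have h := sum_sq_norm (ι := Fin n) (F := HH) Finset.univ (fun i => T (iotaL c (u i)))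
      rw [Fintype.card_fin] at h
      rw [← h]
      exact Finset.sum_congr rfl fun ω _ => by rw [hTz ω]
    set z1 : (Fin n → Bool) → Q → ℝ := fun ω q => clamp M (z ω q) with hz1def
    set z2 : (Fin n → Bool) → Q → ℝ := fun ω q => z ω q - z1 ω q with hz2def
    have hsplit : ∀ ω, T (iotaL c (z ω)) = T (iotaL c (z1 ω)) + T (iotaL c (z2 ω)) := by
      intro ω
      have hzz : z ω = z1 ω + z2 ω := by
        funext q
        rw [Pi.add_apply]
        have h2 : z2 ω q = z ω q - z1 ω q := rfl
        rw [h2]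
        ring
      rw [hzz, map_add, map_add]
    have hz1n : ∀ ω, ‖T (iotaL c (z1 ω))‖ ^ 2 ≤ 12 * ‖T‖ ^ 2 := by
      intro ω
      have h1 : ‖iotaL c (z1 ω)‖ ≤ M :=
        norm_iotaL_le c _ hM0 (fun p => abs_clamp_le hM0 _)
      have h2 : ‖T (iotaL c (z1 ω))‖ ≤ ‖T‖ * M :=
        le_trans (T.le_opNorm _) (mul_le_mul_of_nonneg_left h1 (norm_nonneg T))
      have h3 : ‖T (iotaL c (z1 ω))‖ ^ 2 ≤ (‖T‖ * M) ^ 2 := by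
        nlinarith [norm_nonneg (T (iotaL c (z1 ω)))]
      calc ‖T (iotaL c (z1 ω))‖ ^ 2 ≤ (‖T‖ * M) ^ 2 := h3
        _ = M ^ 2 * ‖T‖ ^ 2 := by ring
        _ = 12 * ‖T‖ ^ 2 := by rw [hM2]
    have hz2sum : ∀ p, ∑ ω : Fin n → Bool, (z2 ω (c p)) ^ 2 ≤ 2 ^ n / 4 := by
      intro p
      have h4 : ∑ ω : Fin n → Bool, (z ω (c p)) ^ 4
          ≤ 3 * 2 ^ n * (∑ i, (u i (c p)) ^ 2) ^ 2 := by
        have h := sum_fourth (ι := Fin n) Finset.univ (fun i => u i (c p))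
        rw [Fintype.card_fin] at h
        refine le_trans (le_of_eq ?_) h
        exact Finset.sum_congr rfl fun ω _ => by rw [hzq ω]
      have hle1 : (∑ i, (u i (c p)) ^ 2) ^ 2 ≤ 1 := by
        have h1 := hu1 p
        have h0 : (0:ℝ) ≤ ∑ i, (u i (c p)) ^ 2 :=
          Finset.sum_nonneg fun i _ => sq_nonneg _
        nlinarith
      have hsq : ∀ ω : Fin n → Bool, (z2 ω (c p)) ^ 2 ≤ (z ω (c p)) ^ 4 / 12 := by
        intro ω
        have h := sq_sub_clamp_le hM0 (z ω (c p))
        rw [hM2] at h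
        have : z2 ω (c p) = z ω (c p) - clamp M (z ω (c p)) := rfl
        rw [this]
        linarith
      calc ∑ ω : Fin n → Bool, (z2 ω (c p)) ^ 2
          ≤ ∑ ω : Fin n → Bool, (z ω (c p)) ^ 4 / 12 := Finset.sum_le_sum fun ω _ => hsq ω
        _ = (∑ ω : Fin n → Bool, (z ω (c p)) ^ 4) / 12 := by rw [Finset.sum_div]
        _ ≤ (3 * 2 ^ n * 1) / 12 := by
            have h0 : (0:ℝ) ≤ 3 * 2 ^ n := by positivity
            have := mul_le_mul_of_nonneg_left hle1 h0
            have h5 := le_trans h4 this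
            linarith
        _ = 2 ^ n / 4 := by ring
    set κ := Fintype.equivFinOfCardEq
      (by simp [Fintype.card_fun] : Fintype.card (Fin n → Bool) = 2 ^ n) with hκdef
    set w : ℝ := (Real.sqrt (2 ^ n))⁻¹ with hwdef
    have hw0 : 0 < Real.sqrt (2 ^ n) := Real.sqrt_pos.2 (by positivity)
    have hwpos : 0 < w := inv_pos.2 hw0
    have hw2 : w ^ 2 = ((2:ℝ) ^ n)⁻¹ := by
      rw [hwdef, inv_pow, Real.sq_sqrt (by positivity)]
    set x' : Fin (2 ^ n) → Q → ℝ := fun t q => (2 * w) * z2 (κ.symm t) q with hx'def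
    have hsum_equiv : ∀ (g : (Fin n → Bool) → ℝ),
        ∑ t : Fin (2 ^ n), g (κ.symm t) = ∑ ω : Fin n → Bool, g ω :=
      fun g => Equiv.sum_comp κ.symm g
    have hpk : (0:ℝ) < 2 ^ n := by positivity
    have hx1' : ∀ p, ∑ t, (x' t (c p)) ^ 2 ≤ 1 := by
      intro p
      have h1 : ∑ t : Fin (2 ^ n), (x' t (c p)) ^ 2
          = 4 * w ^ 2 * ∑ ω : Fin n → Bool, (z2 ω (c p)) ^ 2 := by
        rw [← hsum_equiv (fun ω => (z2 ω (c p)) ^ 2), Finset.mul_sum]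
        exact Finset.sum_congr rfl fun t _ => by rw [hx'def]; ring
      rw [h1, hw2]
      have h2 := hz2sum p
      have h3 : 4 * ((2:ℝ) ^ n)⁻¹ * ∑ ω : Fin n → Bool, (z2 ω (c p)) ^ 2
          ≤ 4 * ((2:ℝ) ^ n)⁻¹ * (2 ^ n / 4) := by
        have hnn : (0:ℝ) ≤ 4 * ((2:ℝ) ^ n)⁻¹ := by positivity
        exact mul_le_mul_of_nonneg_left h2 hnn
      have h4 : 4 * ((2:ℝ) ^ n)⁻¹ * ((2:ℝ) ^ n / 4) = 1 := by
        field_simp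
      linarith
    have hx0' : ∀ t q, (∀ p, c p ≠ q) → x' t q = 0 := by
      intro t q hq
      have hz0 : z (κ.symm t) q = 0 := by
        rw [hzq]
        exact Finset.sum_eq_zero fun i _ => by rw [hu0 i q hq, mul_zero]
      have : z1 (κ.symm t) q = 0 := by rw [hz1def]; simp only []; rw [hz0, clamp_zero hM0]
      rw [hx'def]
      simp only [hz2def]
      rw [hz0, this]
      ring
    have hvalmem : (∑ t, ‖T (iotaL c (x' t))‖ ^ 2) ∈ S :=
      ⟨2 ^ n, x', hx1', hx0', rfl⟩
    have hvalsum : ∑ t, ‖T (iotaL c (x' t))‖ ^ 2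
        = 4 * w ^ 2 * ∑ ω : Fin n → Bool, ‖T (iotaL c (z2 ω))‖ ^ 2 := by
      rw [← hsum_equiv (fun ω => ‖T (iotaL c (z2 ω))‖ ^ 2), Finset.mul_sum]
      refine Finset.sum_congr rfl fun t _ => ?_
      have hxf : x' t = (2 * w) • z2 (κ.symm t) := by
        funext q
        rw [hx'def]
        simp [smul_eq_mul]
      rw [hxf, map_smul, map_smul, norm_smul, Real.norm_eq_abs,
        abs_of_pos (by positivity : (0:ℝ) < 2 * w), mul_pow]
      ring
    have hz2S : ∑ ω : Fin n → Bool, ‖T (iotaL c (z2 ω))‖ ^ 2 ≤ (2 ^ n / 4) * sSup S := by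
      have h1 : ∑ t, ‖T (iotaL c (x' t))‖ ^ 2 ≤ sSup S := le_csSup hbdd hvalmem
      rw [hvalsum, hw2] at h1
      have h2 : (0:ℝ) < 4 * ((2:ℝ) ^ n)⁻¹ := by positivity
      calc ∑ ω : Fin n → Bool, ‖T (iotaL c (z2 ω))‖ ^ 2
          = (4 * ((2:ℝ) ^ n)⁻¹)⁻¹ * (4 * ((2:ℝ) ^ n)⁻¹ * ∑ ω : Fin n → Bool, ‖T (iotaL c (z2 ω))‖ ^ 2) := by
            field_simp
        _ ≤ (4 * ((2:ℝ) ^ n)⁻¹)⁻¹ * sSup S := by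
            exact mul_le_mul_of_nonneg_left h1 (le_of_lt (inv_pos.2 h2))
        _ = (2 ^ n / 4) * sSup S := by
            congr 1
            rw [mul_inv, inv_inv]
            ring
    have hptw : ∀ ω : Fin n → Bool, ‖T (iotaL c (z ω))‖ ^ 2
        ≤ 24 * ‖T‖ ^ 2 + 2 * ‖T (iotaL c (z2 ω))‖ ^ 2 := by
      intro ω
      have htri : ‖T (iotaL c (z ω))‖ ≤ ‖T (iotaL c (z1 ω))‖ + ‖T (iotaL c (z2 ω))‖ := by
        rw [hsplit ω]
        exact norm_add_le _ _
      have hsq2 : ‖T (iotaL c (z ω))‖ ^ 2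
          ≤ (‖T (iotaL c (z1 ω))‖ + ‖T (iotaL c (z2 ω))‖) ^ 2 := by
        nlinarith [htri, norm_nonneg (T (iotaL c (z ω))), norm_nonneg (T (iotaL c (z1 ω))),
          norm_nonneg (T (iotaL c (z2 ω)))]
      nlinarith [hsq2, hz1n ω,
        sq_nonneg (‖T (iotaL c (z1 ω))‖ - ‖T (iotaL c (z2 ω))‖)]
    have hfin : 2 ^ n * ∑ i, ‖T (iotaL c (u i))‖ ^ 2
        ≤ 2 ^ n * (24 * ‖T‖ ^ 2) + 2 * ((2 ^ n / 4) * sSup S) := by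
      rw [← A1]
      calc ∑ ω : Fin n → Bool, ‖T (iotaL c (z ω))‖ ^ 2
          ≤ ∑ ω : Fin n → Bool, (24 * ‖T‖ ^ 2 + 2 * ‖T (iotaL c (z2 ω))‖ ^ 2) :=
            Finset.sum_le_sum fun ω _ => hptw ω
        _ = 2 ^ n * (24 * ‖T‖ ^ 2) + 2 * ∑ ω : Fin n → Bool, ‖T (iotaL c (z2 ω))‖ ^ 2 := by
            rw [Finset.sum_add_distrib, Finset.sum_const, ← Finset.mul_sum]
            congr 1
            · rw [nsmul_eq_mul]
              congr 1
              simp [Fintype.card_fun]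
        _ ≤ 2 ^ n * (24 * ‖T‖ ^ 2) + 2 * ((2 ^ n / 4) * sSup S) := by
            have := hz2S
            linarith
    have hV0 : (0:ℝ) ≤ ∑ i, ‖T (iotaL c (u i))‖ ^ 2 :=
      Finset.sum_nonneg fun i _ => sq_nonneg _
    have hrw : 2 ^ n * (24 * ‖T‖ ^ 2 + sSup S / 2)
        = 2 ^ n * (24 * ‖T‖ ^ 2) + 2 * ((2 ^ n / 4) * sSup S) := by ring
    have hfin2 : 2 ^ n * (∑ i, ‖T (iotaL c (u i))‖ ^ 2)
        ≤ 2 ^ n * (24 * ‖T‖ ^ 2 + sSup S / 2) := by rw [hrw]; exact hfin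
    exact le_of_mul_le_mul_left hfin2 hpk
  have hsup : sSup S ≤ 48 * ‖T‖ ^ 2 := by
    have h1 : sSup S ≤ 24 * ‖T‖ ^ 2 + sSup S / 2 := csSup_le ⟨0, h0S⟩ hmem
    linarith
  exact le_trans (le_csSup hbdd ⟨k, x, hx1, hx0, rfl⟩) hsup

end Key

section Main

open Classical in
/-- abstract core: no continuous linear maps `T, j` with `T ∘ j = id` -/
theorem no_complemented (T : LL →L[ℝ] HH) (j : HH →L[ℝ] LL)
    (hTj : ∀ f, T (j f) = f) : False := by
  classical
  set B : ℝ := max ‖T‖ 1 with hBdef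
  set R : ℝ := max ‖j‖ 1 with hRdef
  have hB1 : 1 ≤ B := le_max_right _ _
  have hR1 : 1 ≤ R := le_max_right _ _
  have hB0 : 0 < B := lt_of_lt_of_le one_pos hB1
  have hR0 : 0 < R := lt_of_lt_of_le one_pos hR1
  have hTB : ‖T‖ ≤ B := le_max_left _ _
  have hjR : ‖j‖ ≤ R := le_max_left _ _
  -- choose m
  set m : ℕ := ⌈768 * B ^ 2 * R ^ 2⌉₊ + 1 with hmdef
  have hmgt : 768 * B ^ 2 * R ^ 2 < (m : ℝ) := by
    have h1 : (768 * B ^ 2 * R ^ 2 : ℝ) ≤ (⌈768 * B ^ 2 * R ^ 2⌉₊ : ℝ) := Nat.le_ceil _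
    have h2 : ((⌈768 * B ^ 2 * R ^ 2⌉₊ : ℕ) : ℝ) < (m : ℝ) := by
      rw [hmdef]
      push_cast
      linarith
    linarith
  have hm1 : (1:ℝ) ≤ (m : ℝ) := by
    have h1 : 1 ≤ m := Nat.le_add_left 1 _
    exact_mod_cast h1
  have hsm : 0 < Real.sqrt m := Real.sqrt_pos.2 (by linarith)
  have hsm2 : Real.sqrt m ^ 2 = (m : ℝ) := Real.sq_sqrt (by linarith)
  set η : ℝ := R / Real.sqrt m with hηdef
  have hη0 : 0 < η := div_pos hR0 hsm
  -- basis vectors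
  set en : Fin m → HH := fun n => lp.single 2 (n : ℕ) (1 : ℝ) with hendef
  have hen_norm : ∀ n, ‖en n‖ = 1 := by
    intro n
    have := lp.norm_single (p := 2) (E := fun _ : ℕ => ℝ) (by norm_num) (n : ℕ) (1:ℝ)
    simpa [hendef] using this
  set y : Fin m → LL := fun n => j (en n) with hydef
  have hyb : ∀ n p, |y n p| ≤ R := by
    intro n p
    have h1 : ‖y n p‖ ≤ ‖y n‖ := lp.norm_apply_le_norm ENNReal.top_ne_zero (y n) p
    have h2 : ‖y n‖ ≤ ‖j‖ * ‖en n‖ := j.le_opNorm _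
    rw [hen_norm n, mul_one] at h2
    rw [Real.norm_eq_abs] at h1
    linarith [le_trans h2 hjR]
  -- column bound
  have hTyn : ∀ n, T (y n) = en n := fun n => hTj (en n)
  have hinner_en : ∀ n n' : Fin m, ⟪en n, en n'⟫ = if n = n' then 1 else 0 := by
    intro n n'
    rw [hendef]
    rw [lp.inner_single_left]
    by_cases h : n = n'
    · subst h
      rw [if_pos rfl, lp.single_apply_self]
      simp
    · rw [if_neg h, lp.single_apply_ne 2 _ _ (fun hc => h (Fin.ext hc))]
      simp
  have hcol : ∀ p, ∑ n : Fin m, (y n p) ^ 2 ≤ R ^ 2 := by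
    intro p
    set s := ∑ n : Fin m, (y n p) ^ 2 with hsdef
    have hs0 : 0 ≤ s := Finset.sum_nonneg fun n _ => sq_nonneg _
    set v : HH := ∑ n : Fin m, (y n p) • en n with hvdef
    have hnv : ‖v‖ ^ 2 = s := by
      rw [← real_inner_self_eq_norm_sq, hvdef]
      rw [sum_inner]
      have hterm : ∀ n : Fin m, ⟪(y n p) • en n, ∑ n' : Fin m, (y n' p) • en n'⟫
          = (y n p) ^ 2 := by
        intro n
        rw [real_inner_smul_left, inner_sum]
        have : ∀ n' : Fin m, ⟪en n, (y n' p) • en n'⟫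
            = (y n' p) * (if n = n' then 1 else 0) := by
          intro n'
          rw [real_inner_smul_right, hinner_en]
        rw [Finset.sum_congr rfl fun n' _ => this n']
        simp [Finset.sum_ite_eq, sq]
      rw [Finset.sum_congr rfl fun n _ => hterm n]
    have hjv : (j v) p = s := by
      have h1 : j v = ∑ n : Fin m, (y n p) • y n := by
        rw [hvdef, map_sum]
        exact Finset.sum_congr rfl fun n _ => by rw [map_smul]
      have h2 : (j v : ℕ → ℝ) p = ∑ n : Fin m, ((y n p) • y n : LL) p := by
        rw [h1, lp.coeFn_sum, Finset.sum_apply]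
      rw [h2]
      have h3 : ∀ n : Fin m, ((y n p • y n : LL) : ℕ → ℝ) p = y n p * y n p := by
        intro n
        rw [lp.coeFn_smul, Pi.smul_apply, smul_eq_mul]
      rw [Finset.sum_congr rfl fun n _ => h3 n]
      simp [hsdef, pow_two]
    have h2 : s ≤ ‖j v‖ := by
      rw [← hjv]
      calc (j v) p ≤ |(j v) p| := le_abs_self _
        _ ≤ ‖j v‖ := by
          have := lp.norm_apply_le_norm ENNReal.top_ne_zero (j v) p
          rwa [Real.norm_eq_abs] at this
    have hvn : ‖v‖ = Real.sqrt s := by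
      rw [← hnv, Real.sqrt_sq (norm_nonneg v)]
    have h3 : ‖j v‖ ≤ R * Real.sqrt s := by
      calc ‖j v‖ ≤ ‖j‖ * ‖v‖ := j.le_opNorm v
        _ ≤ R * Real.sqrt s := by
          rw [hvn]
          exact mul_le_mul_of_nonneg_right hjR (Real.sqrt_nonneg s)
    nlinarith [Real.sq_sqrt hs0, Real.sqrt_nonneg s, sq_nonneg (Real.sqrt s - R)]
  -- the grid
  set K : ℤ := ⌈Real.sqrt m⌉ with hKdef
  have hK : Real.sqrt m ≤ (K : ℝ) := Int.le_ceil _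
  have hmem : ∀ (n : Fin m) (p : ℕ), ⌊y n p / η⌋ ∈ Finset.Icc (-K) K := by
    intro n p
    have hηm : η * Real.sqrt m = R := by
      rw [hηdef]
      field_simp
    have hrange : |y n p / η| ≤ Real.sqrt m := by
      rw [abs_div, abs_of_pos hη0, div_le_iff₀ hη0]
      rw [mul_comm, hηm]
      exact hyb n p
    have hr := abs_le.1 hrange
    rw [Finset.mem_Icc]
    constructor
    · rw [Int.le_floor]
      push_cast
      linarith
    · have h1 : (⌊y n p / η⌋ : ℝ) ≤ (K : ℝ) := le_trans (Int.floor_le _) (by linarith)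
      exact_mod_cast h1
  set c : ℕ → (Fin m → {z : ℤ // z ∈ Finset.Icc (-K) K}) :=
    fun p n => ⟨⌊y n p / η⌋, hmem n p⟩ with hcdef
  set xx : Fin m → (Fin m → {z : ℤ // z ∈ Finset.Icc (-K) K}) → ℝ :=
    fun n q => if _h : ∃ p, c p = q then η * ((q n : ℤ) : ℝ) else 0 with hxxdef
  set y' : Fin m → LL := fun n => iotaL c (xx n) with hy'def
  have hy'p : ∀ n p, y' n p = η * (⌊y n p / η⌋ : ℝ) := by
    intro n p
    have h0 : y' n p = xx n (c p) := rfl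
    rw [h0]
    have h1 : xx n (c p) = η * ((c p n : ℤ) : ℝ) := by
      simp only [hxxdef]
      rw [dif_pos ⟨p, rfl⟩]
    rw [h1]
  have herr : ∀ n p, |y' n p - y n p| ≤ η := by
    intro n p
    rw [hy'p]
    have h1 : (⌊y n p / η⌋ : ℝ) ≤ y n p / η := Int.floor_le _
    have h2 : y n p / η - 1 < (⌊y n p / η⌋ : ℝ) := Int.sub_one_lt_floor _
    have h3 : η * (y n p / η) = y n p := by field_simp
    rw [abs_le]
    constructor
    · nlinarith
    · nlinarith
  have herrnorm : ∀ n, ‖y' n - y n‖ ≤ η := by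
    intro n
    apply lp.norm_le_of_forall_le (le_of_lt hη0)
    intro p
    rw [lp.coeFn_sub, Pi.sub_apply, Real.norm_eq_abs]
    exact herr n p
  -- diagonal lower bound
  have hBη : B * η ≤ 1 / 2 := by
    have h1 : 2 * B * R ≤ Real.sqrt m := by
      rw [show (2 * B * R) = 2 * B * R from rfl]
      refine (Real.le_sqrt (by positivity) (by positivity)).2 ?_
      nlinarith [hmgt, mul_nonneg (sq_nonneg B) (sq_nonneg R)]
    have h2 : B * η = B * R / Real.sqrt m := by rw [hηdef]; ring
    rw [h2, div_le_iff₀ hsm]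
    linarith
  have hdiag : ∀ n, 1 / 2 ≤ ⟪T (y' n), en n⟫ := by
    intro n
    have hsp : T (y' n) = en n + T (y' n - y n) := by
      rw [map_sub, hTyn n]
      abel
    rw [hsp, inner_add_left]
    have h1 : ⟪en n, en n⟫ = 1 := by
      rw [real_inner_self_eq_norm_sq, hen_norm]
      norm_num
    have h2 : |⟪T (y' n - y n), en n⟫| ≤ B * η := by
      calc |⟪T (y' n - y n), en n⟫| ≤ ‖T (y' n - y n)‖ * ‖en n‖ := abs_real_inner_le_norm _ _
        _ = ‖T (y' n - y n)‖ := by rw [hen_norm, mul_one]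
        _ ≤ ‖T‖ * ‖y' n - y n‖ := T.le_opNorm _
        _ ≤ B * η := mul_le_mul hTB (herrnorm n) (norm_nonneg _) (le_of_lt hB0)
    have h3 := (abs_le.1 h2).1
    rw [h1]
    linarith
  -- column bound for y'
  have hcol' : ∀ p, ∑ n : Fin m, (y' n p) ^ 2 ≤ 4 * R ^ 2 := by
    intro p
    have habs : ∀ n : Fin m, (y' n p) ^ 2 ≤ (y n p) ^ 2 + 2 * η * |y n p| + η ^ 2 := by
      intro n
      have hd := herr n p
      have hdd := abs_le.1 hd
      have h1 : y n p * (y' n p - y n p) ≤ |y n p| * η := by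
        calc y n p * (y' n p - y n p) ≤ |y n p * (y' n p - y n p)| := le_abs_self _
          _ = |y n p| * |y' n p - y n p| := abs_mul _ _
          _ ≤ |y n p| * η := mul_le_mul_of_nonneg_left hd (abs_nonneg _)
      have h2 : (y' n p - y n p) ^ 2 ≤ η ^ 2 := by nlinarith
      nlinarith
    have hsum1 : ∑ n : Fin m, |y n p| ≤ Real.sqrt m * R := by
      have hcs := sq_sum_le_card_mul_sum_sq (s := (Finset.univ : Finset (Fin m)))
        (f := fun n : Fin m => |y n p|)
      have heq : ∑ n : Fin m, |y n p| ^ 2 = ∑ n : Fin m, (y n p) ^ 2 := by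
        exact Finset.sum_congr rfl fun n _ => sq_abs _
      have hcs' : (∑ n : Fin m, |y n p|) ^ 2 ≤ (m : ℝ) * R ^ 2 := by
        have hcard : ((Finset.univ : Finset (Fin m)).card : ℝ) = (m : ℝ) := by
          simp
        calc (∑ n : Fin m, |y n p|) ^ 2
            ≤ ((Finset.univ : Finset (Fin m)).card : ℝ) * ∑ n : Fin m, |y n p| ^ 2 := by
              exact_mod_cast hcs
          _ = (m : ℝ) * ∑ n : Fin m, (y n p) ^ 2 := by rw [hcard, heq]
          _ ≤ (m : ℝ) * R ^ 2 := by
              exact mul_le_mul_of_nonneg_left (hcol p) (by positivity)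
      have ha0 : 0 ≤ ∑ n : Fin m, |y n p| := Finset.sum_nonneg fun n _ => abs_nonneg _
      have hb : ∑ n : Fin m, |y n p| = Real.sqrt ((∑ n : Fin m, |y n p|) ^ 2) :=
        (Real.sqrt_sq ha0).symm
      rw [hb]
      calc Real.sqrt ((∑ n : Fin m, |y n p|) ^ 2) ≤ Real.sqrt ((m : ℝ) * R ^ 2) :=
            Real.sqrt_le_sqrt hcs'
        _ = Real.sqrt m * R := by
            rw [Real.sqrt_mul (by positivity) (R ^ 2), Real.sqrt_sq (le_of_lt hR0)]
    have hηm2 : (m : ℝ) * η ^ 2 = R ^ 2 := by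
      rw [hηdef, div_pow, hsm2]
      field_simp
    have hηsm : η * Real.sqrt m = R := by
      rw [hηdef]
      field_simp
    calc ∑ n : Fin m, (y' n p) ^ 2
        ≤ ∑ n : Fin m, ((y n p) ^ 2 + 2 * η * |y n p| + η ^ 2) :=
          Finset.sum_le_sum fun n _ => habs n
      _ = (∑ n : Fin m, (y n p) ^ 2) + 2 * η * (∑ n : Fin m, |y n p|) + (m : ℝ) * η ^ 2 := by
          rw [Finset.sum_add_distrib, Finset.sum_add_distrib, ← Finset.mul_sum,
            Finset.sum_const, Finset.card_univ, Fintype.card_fin, nsmul_eq_mul]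
      _ ≤ R ^ 2 + 2 * η * (Real.sqrt m * R) + R ^ 2 := by
          have h1 := hcol p
          have h2 : 2 * η * (∑ n : Fin m, |y n p|) ≤ 2 * η * (Real.sqrt m * R) :=
            mul_le_mul_of_nonneg_left hsum1 (by positivity)
          linarith [hηm2.le, hηm2.ge]
      _ = 4 * R ^ 2 := by
          have hx : 2 * η * (Real.sqrt m * R) = 2 * R ^ 2 := by
            linear_combination (2 * R) * hηsm
          linarith
  -- apply the key lemma
  set X : Fin m → (Fin m → {z : ℤ // z ∈ Finset.Icc (-K) K}) → ℝ :=
    fun n q => xx n q / (2 * R) with hXdef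
  have hX1 : ∀ p, ∑ n : Fin m, (X n (c p)) ^ 2 ≤ 1 := by
    intro p
    have hxcp : ∀ n, xx n (c p) = y' n p := fun n => rfl
    have h1 : ∑ n : Fin m, (X n (c p)) ^ 2 = (∑ n : Fin m, (y' n p) ^ 2) / (4 * R ^ 2) := by
      rw [Finset.sum_div]
      refine Finset.sum_congr rfl fun n _ => ?_
      rw [hXdef]
      simp only []
      rw [hxcp n, div_pow]
      congr 1
      ring
    rw [h1, div_le_one (by positivity)]
    exact hcol' p
  have hX0 : ∀ (n : Fin m) q, (∀ p, c p ≠ q) → X n q = 0 := by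
    intro n q hq
    have hne : ¬ ∃ p, c p = q := by
      rintro ⟨p, hp⟩
      exact hq p hp
    simp only [hXdef, hxxdef]
    rw [dif_neg hne]
    simp
  have hkey := key c T X hX1 hX0
  have hlow : ∀ n, (1 : ℝ) / 4 ≤ ‖T (y' n)‖ ^ 2 := by
    intro n
    have h1 := hdiag n
    have h2 := real_inner_mul_inner_self_le (T (y' n)) (en n)
    rw [real_inner_self_eq_norm_sq, real_inner_self_eq_norm_sq, hen_norm] at h2
    nlinarith
  have hup : ∑ n : Fin m, ‖T (y' n)‖ ^ 2 ≤ 192 * B ^ 2 * R ^ 2 := by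
    have hsc : ∀ n, y' n = (2 * R) • iotaL c (X n) := by
      intro n
      rw [hy'def]
      simp only []
      rw [← map_smul]
      congr 1
      funext q
      rw [hXdef]
      simp only [Pi.smul_apply, smul_eq_mul]
      field_simp
    have hTn2 : ‖T‖ ^ 2 ≤ B ^ 2 := by nlinarith [norm_nonneg T]
    calc ∑ n : Fin m, ‖T (y' n)‖ ^ 2
        = ∑ n : Fin m, (2 * R) ^ 2 * ‖T (iotaL c (X n))‖ ^ 2 := by
          refine Finset.sum_congr rfl fun n _ => ?_
          rw [hsc n, map_smul, norm_smul, Real.norm_eq_abs,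
            abs_of_pos (by positivity : (0:ℝ) < 2 * R), mul_pow]
      _ = (2 * R) ^ 2 * ∑ n : Fin m, ‖T (iotaL c (X n))‖ ^ 2 := by rw [Finset.mul_sum]
      _ ≤ (2 * R) ^ 2 * (48 * ‖T‖ ^ 2) :=
          mul_le_mul_of_nonneg_left hkey (by positivity)
      _ = 192 * R ^ 2 * ‖T‖ ^ 2 := by ring
      _ ≤ 192 * R ^ 2 * B ^ 2 := mul_le_mul_of_nonneg_left hTn2 (by positivity)
      _ = 192 * B ^ 2 * R ^ 2 := by ring
  have hfinal : (m : ℝ) / 4 ≤ 192 * B ^ 2 * R ^ 2 := by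
    have h1 : ∑ _n : Fin m, (1 : ℝ) / 4 ≤ ∑ n : Fin m, ‖T (y' n)‖ ^ 2 :=
      Finset.sum_le_sum fun n _ => hlow n
    rw [Finset.sum_const, Finset.card_univ, Fintype.card_fin, nsmul_eq_mul] at h1
    linarith
  linarith

end Main

end Stmt7Aux


theorem stmt7 (E : Submodule ℝ (lp (fun _ : ℕ => ℝ) ⊤))
    (hE : IsClosed (E : Set (lp (fun _ : ℕ => ℝ) ⊤)))
    (e : (lp (fun _ : ℕ => ℝ) 2) ≃L[ℝ] E)
    (P : (lp (fun _ : ℕ => ℝ) ⊤) →L[ℝ] (lp (fun _ : ℕ => ℝ) ⊤))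
    (hP : ∀ x, P (P x) = P x)
    (hrange : LinearMap.range (P : (lp (fun _ : ℕ => ℝ) ⊤) →ₗ[ℝ] (lp (fun _ : ℕ => ℝ) ⊤)) = E) :
    False := by
  have hmem : ∀ x, P x ∈ E := by
    intro x
    rw [← hrange]
    exact LinearMap.mem_range_self _ x
  set Pc : (lp (fun _ : ℕ => ℝ) ⊤) →L[ℝ] E := P.codRestrict E hmem with hPc
  set T : (lp (fun _ : ℕ => ℝ) ⊤) →L[ℝ] (lp (fun _ : ℕ => ℝ) 2) :=
    (e.symm : E →L[ℝ] (lp (fun _ : ℕ => ℝ) 2)).comp Pc with hT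
  set j : (lp (fun _ : ℕ => ℝ) 2) →L[ℝ] (lp (fun _ : ℕ => ℝ) ⊤) :=
    E.subtypeL.comp (e : (lp (fun _ : ℕ => ℝ) 2) →L[ℝ] E) with hj
  have hfix : ∀ z : lp (fun _ : ℕ => ℝ) ⊤, z ∈ E → P z = z := by
    intro z hz
    rw [← hrange] at hz
    obtain ⟨w, rfl⟩ := hz
    exact hP w
  have hTj : ∀ f, T (j f) = f := by
    intro f
    have h1 : (j f : lp (fun _ : ℕ => ℝ) ⊤) = ((e f : E) : lp (fun _ : ℕ => ℝ) ⊤) := rfl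
    have h2 : Pc (j f) = e f := by
      apply Subtype.ext
      have h3 : (Pc (j f) : lp (fun _ : ℕ => ℝ) ⊤) = P (j f) := rfl
      rw [h3, h1]
      exact hfix _ (e f).2
    calc T (j f) = e.symm (Pc (j f)) := rfl
      _ = e.symm (e f) := by rw [h2]
      _ = f := e.symm_apply_apply f
  exact Stmt7Aux.no_complemented T j hTj
end
end

section
/- Let X and Y be normed spaces, n > 1, and F : M_n(X) → M_n(Y) a map on n×n matrices. Suppose (f^r)_{r≥0} and (g^r)_{r≥0} are two families of maps X → Y such that for every r ≥ 0, F agrees with the entrywise amplification of f^r on the sphere of radius r of M_n(X), and likewise with g^r. Then f^r(x) = g^r(x) for every r ≥ 0 and every x ∈ X with ‖x‖ ≤ r. -/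
theorem stmt10 {X Y : Type*} [NormedAddCommGroup X] [NormedAddCommGroup Y]
    (n : ℕ)  -- matrices of size n + 2, i.e. size > 1
    (NX : Matrix (Fin (n+2)) (Fin (n+2)) X → ℝ)
    -- each entry's norm is at most the matrix norm
    (hentry : ∀ A : Matrix (Fin (n+2)) (Fin (n+2)) X, ∀ i j, ‖A i j‖ ≤ NX A)
    -- block-diagonal property: any `x` with `‖x‖ ≤ r` is the `(0,0)`-entry of a
    -- matrix of norm exactly `r` (placing a block of norm `r` on the rest of the diagonal)
    (hdiag : ∀ r : ℝ, 0 ≤ r → ∀ x : X, ‖x‖ ≤ r →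
      ∃ A : Matrix (Fin (n+2)) (Fin (n+2)) X, NX A = r ∧ A 0 0 = x)
    (F : Matrix (Fin (n+2)) (Fin (n+2)) X → Matrix (Fin (n+2)) (Fin (n+2)) Y)
    (f g : ℝ → X → Y)
    -- both families witness that `F` is a spherical amplification
    (hf : ∀ r : ℝ, 0 ≤ r → ∀ A, NX A = r → ∀ i j, F A i j = f r (A i j))
    (hg : ∀ r : ℝ, 0 ≤ r → ∀ A, NX A = r → ∀ i j, F A i j = g r (A i j)) :
    ∀ r : ℝ, 0 ≤ r → ∀ x : X, ‖x‖ ≤ r → f r x = g r x := by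
  intro r hr x hx
  obtain ⟨A, hA, h00⟩ := hdiag r hr x hx
  have h1 := hf r hr A hA 0 0
  have h2 := hg r hr A hA 0 0
  rw [h00] at h1 h2
  rw [← h1, h2]
end

section
/- Let X and Y be normed spaces, n > 1, and F : M_n(X) → M_n(Y) an ℝ-linear spherical amplification (with matrix norms satisfying ‖diag(a,b)‖ = max{‖a‖,‖b‖} and entrywise norm domination). Then F is an amplification: there exists a single map g : X → Y with F = g_n on all of M_n(X), and g is determined by g(x) = (‖x‖/r)·f^r(r·x/‖x‖) for any r > 0, where (f^r) witnesses the spherical amplification. -/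
theorem stmt11 {X Y : Type*} [NormedAddCommGroup X] [NormedSpace ℝ X]
    [NormedAddCommGroup Y] [NormedSpace ℝ Y]
    (n : ℕ)  -- matrices of size n + 2, i.e. size > 1
    (NX : Matrix (Fin (n+2)) (Fin (n+2)) X → ℝ)
    (hentry : ∀ A : Matrix (Fin (n+2)) (Fin (n+2)) X, ∀ i j, ‖A i j‖ ≤ NX A)
    (hNXhom : ∀ (c : ℝ) (A : Matrix (Fin (n+2)) (Fin (n+2)) X), NX (c • A) = |c| * NX A)
    (hdiag : ∀ r : ℝ, 0 ≤ r → ∀ x : X, ‖x‖ ≤ r →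
      ∃ A : Matrix (Fin (n+2)) (Fin (n+2)) X, NX A = r ∧ A 0 0 = x)
    (F : Matrix (Fin (n+2)) (Fin (n+2)) X → Matrix (Fin (n+2)) (Fin (n+2)) Y)
    (hlin : IsLinearMap ℝ F)
    (f : ℝ → X → Y)
    -- `(f r)_{r ≥ 0}` witnesses that `F` is a spherical amplification
    (hf : ∀ r : ℝ, 0 ≤ r → ∀ A, NX A = r → ∀ i j, F A i j = f r (A i j)) :
    ∃ g : X → Y, (∀ A i j, F A i j = g (A i j)) ∧
      ∀ r : ℝ, 0 < r → ∀ x : X, x ≠ 0 → g x = (‖x‖ / r) • f r ((r / ‖x‖) • x) := by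
  -- NX is nonnegative
  have hNX0 : ∀ A, 0 ≤ NX A := fun A => le_trans (norm_nonneg _) (hentry A 0 0)
  have hFzero : F 0 = 0 := by
    have h := hlin.map_smul 0 0
    simpa using h
  have hNXzero : NX 0 = 0 := by
    have h := hNXhom 0 0
    simpa using h
  -- f 0 0 = 0
  have hf00 : f 0 (0 : X) = 0 := by
    have h := hf 0 le_rfl 0 hNXzero 0 0
    rw [hFzero] at h
    simpa using h.symm
  -- scaling law
  have hscale : ∀ (c r : ℝ), 0 < c → 0 ≤ r → ∀ x : X, ‖x‖ ≤ r →
      f (c * r) (c • x) = c • f r x := by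
    intro c r hc hr x hx
    obtain ⟨A, hA, hA0⟩ := hdiag r hr x hx
    have h1 : NX (c • A) = c * r := by rw [hNXhom, abs_of_pos hc, hA]
    have h2 := hf (c * r) (by positivity) (c • A) h1 0 0
    have h3 := hf r hr A hA 0 0
    have e1 : (c • A) 0 0 = c • x := by simp [hA0]
    have e2 : F (c • A) 0 0 = c • (F A 0 0) := by rw [hlin.map_smul]; simp
    rw [e1] at h2
    rw [h2, h3, hA0] at e2
    exact e2
  -- f t 0 = t • f 1 0 for t ≥ 0
  have hphi : ∀ t : ℝ, 0 ≤ t → f t (0 : X) = t • f 1 (0 : X) := by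
    intro t ht
    rcases eq_or_lt_of_le ht with h | h
    · rw [← h, hf00, zero_smul]
    · have := hscale t 1 h zero_le_one 0 (by simp)
      simpa using this
  -- f 1 0 = 0
  have hf10 : f 1 (0 : X) = 0 := by
    obtain ⟨D, hD, hD0⟩ := hdiag 1 zero_le_one 0 (by simp)
    obtain ⟨E, hE, hE0⟩ := hdiag 2 (by norm_num) 0 (by simp)
    have ht : 0 ≤ NX (D - E) := hNX0 _
    have h1 := hf (NX (D - E)) ht (D - E) rfl 0 0
    have e : (D - E) 0 0 = 0 := by simp [Matrix.sub_apply, hD0, hE0]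
    rw [e] at h1
    have hFsub : F (D - E) 0 0 = F D 0 0 - F E 0 0 := by
      rw [hlin.map_sub]; simp [Matrix.sub_apply]
    have hD1 := hf 1 zero_le_one D hD 0 0
    have hE1 := hf 2 (by norm_num) E hE 0 0
    rw [hD0] at hD1; rw [hE0] at hE1
    have hE2 : f 2 (0 : X) = (2 : ℝ) • f 1 (0 : X) := hphi 2 (by norm_num)
    have key : (NX (D - E)) • f 1 (0 : X) = f 1 (0 : X) - (2 : ℝ) • f 1 (0 : X) := by
      rw [← hphi _ ht, ← h1, hFsub, hD1, hE1, hE2]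
    have key2 : (NX (D - E) + 1) • f 1 (0 : X) = 0 := by
      rw [add_smul, one_smul, key]
      module
    have hpos : NX (D - E) + 1 ≠ 0 := by positivity
    rcases smul_eq_zero.mp key2 with h | h
    · exact absurd h hpos
    · exact h
  have hphi0 : ∀ t : ℝ, 0 ≤ t → f t (0 : X) = 0 := by
    intro t ht; rw [hphi t ht, hf10, smul_zero]
  -- key: f r x = f ‖x‖ x when ‖x‖ ≤ r
  have hkey : ∀ r : ℝ, 0 ≤ r → ∀ x : X, ‖x‖ ≤ r → f r x = f ‖x‖ x := by
    intro r hr x hx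
    obtain ⟨A, hA, hA0⟩ := hdiag r hr x hx
    obtain ⟨B, hB, hB0⟩ := hdiag ‖x‖ (norm_nonneg x) x le_rfl
    have ht : 0 ≤ NX (A - B) := hNX0 _
    have h1 := hf (NX (A - B)) ht (A - B) rfl 0 0
    have e : (A - B) 0 0 = 0 := by simp [Matrix.sub_apply, hA0, hB0]
    rw [e, hphi0 _ ht] at h1
    have hFsub : F (A - B) 0 0 = F A 0 0 - F B 0 0 := by
      rw [hlin.map_sub]; simp [Matrix.sub_apply]
    have hA1 := hf r hr A hA 0 0
    have hB1 := hf ‖x‖ (norm_nonneg x) B hB 0 0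
    rw [hA0] at hA1; rw [hB0] at hB1
    rw [hFsub, hA1, hB1] at h1
    exact sub_eq_zero.mp h1
  refine ⟨fun x => f ‖x‖ x, ?_, ?_⟩
  · intro A i j
    have h1 := hf (NX A) (hNX0 A) A rfl i j
    rw [h1, hkey (NX A) (hNX0 A) (A i j) (hentry A i j)]
  · intro r hr x hx
    have hxn : (0 : ℝ) < ‖x‖ := norm_pos_iff.mpr hx
    set x' : X := (r / ‖x‖) • x with hx'
    have hnx' : ‖x'‖ = r := by
      rw [hx', norm_smul, Real.norm_eq_abs, abs_of_pos (by positivity),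
        div_mul_cancel₀ _ (ne_of_gt hxn)]
    have hs := hscale (‖x‖ / r) r (by positivity) hr.le x' (le_of_eq hnx')
    have e1 : (‖x‖ / r) * r = ‖x‖ := div_mul_cancel₀ _ (ne_of_gt hr)
    have e2 : (‖x‖ / r) • x' = x := by
      rw [hx', smul_smul]
      have h : (‖x‖ / r) * (r / ‖x‖) = 1 := by field_simp
      rw [h, one_smul]
    rw [e1, e2] at hs
    exact hs
end

section
/- Let Z be a Banach space, u : H → Z an isomorphic embedding of a Hilbert space H into Z whose image is complemented in Z by a projection p, and suppose every closed subspace of u(H) is the image of a projection on u(H) of norm at most C. Let p_m : Z → Z be a bounded projection and X ⊆ H an infinite-dimensional closed subspace with ‖(id − p_m)|_{u(X)}‖ < 1/(C‖p‖). Then u(X) maps isomorphically onto a complemented subspace of p_m(Z): the operator w = q ∘ p_m restricted to u(X), where q = p' ∘ p and p' is a norm-≤-C projection of u(H) onto u(X), is invertible on u(X), and p_m ∘ w^{−1} ∘ q restricted to p_m(Z) is a bounded projection of p_m(Z) onto p_m(u(X)). -/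
theorem stmt18 {H Z : Type*} [NormedAddCommGroup H] [InnerProductSpace ℝ H]
    [CompleteSpace H] [NormedAddCommGroup Z] [NormedSpace ℝ Z] [CompleteSpace Z]
    -- `u` is an isomorphic embedding of the Hilbert space `H` into `Z`
    (u : H →L[ℝ] Z) (cu : ℝ) (hcu : 0 < cu) (hu : ∀ x, cu * ‖x‖ ≤ ‖u x‖)
    -- `p` is a bounded projection of `Z` onto `u(H)`
    (p : Z →L[ℝ] Z) (hp_idem : ∀ z, p (p z) = p z)
    (hp_range : ∀ z, p z ∈ LinearMap.range (u : H →ₗ[ℝ] Z))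
    (hp_fix : ∀ z ∈ LinearMap.range (u : H →ₗ[ℝ] Z), p z = z)
    (C : ℝ) (hC : 0 < C)
    -- every closed subspace of `u(H)` is the image of a projection of norm at most `C`;
    -- in particular `u(X)` is, via the projection `p'` below
    (X : Submodule ℝ H) (hXcl : IsClosed (X : Set H)) (hXinf : ¬ FiniteDimensional ℝ ↥X)
    (p' : Z →L[ℝ] Z) (hp'_idem : ∀ z, p' (p' z) = p' z)
    (hp'_range : ∀ z ∈ LinearMap.range (u : H →ₗ[ℝ] Z), p' z ∈ X.map (u : H →ₗ[ℝ] Z))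
    (hp'_fix : ∀ z ∈ X.map (u : H →ₗ[ℝ] Z), p' z = z)
    (hp'_norm : ‖p'‖ ≤ C)
    -- `p_m` is a bounded projection with `‖(id − p_m)|_{u(X)}‖ < 1/(C‖p‖)`
    (pm : Z →L[ℝ] Z) (hpm_idem : ∀ z, pm (pm z) = pm z)
    (ε : ℝ) (hε : 0 ≤ ε)
    (hsmall : ∀ z ∈ X.map (u : H →ₗ[ℝ] Z), ‖z - pm z‖ ≤ ε * ‖z‖)
    (hεsmall : ε * (C * ‖p‖) < 1) :
    -- `w = q ∘ p_m` (with `q = p' ∘ p`) is invertible on `u(X)`, with inverse `v`, and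
    -- `p_m ∘ w⁻¹ ∘ q` is a bounded projection of `p_m(Z)` onto `p_m(u(X))`
    ∃ v : Z →L[ℝ] Z,
      (∀ z ∈ X.map (u : H →ₗ[ℝ] Z), v (p' (p (pm z))) = z) ∧
      (∀ z ∈ X.map (u : H →ₗ[ℝ] Z), p' (p (pm (v z))) = z) ∧
      (∀ z ∈ X.map (u : H →ₗ[ℝ] Z), v z ∈ X.map (u : H →ₗ[ℝ] Z)) ∧
      (∀ z, pm (v (p' (p (pm (v (p' (p z))))))) = pm (v (p' (p z)))) ∧
      (∀ z, pm (v (p' (p z))) ∈ (X.map (u : H →ₗ[ℝ] Z)).map (pm : Z →ₗ[ℝ] Z)) ∧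
      (∀ z ∈ (X.map (u : H →ₗ[ℝ] Z)).map (pm : Z →ₗ[ℝ] Z), pm (v (p' (p z))) = z) := by
  classical
  set E : Submodule ℝ Z := X.map (u : H →ₗ[ℝ] Z) with hE
  -- E is contained in the range of u
  have hEle : ∀ z ∈ E, z ∈ LinearMap.range (u : H →ₗ[ℝ] Z) := by
    rintro z ⟨x, _, rfl⟩; exact ⟨x, rfl⟩
  -- q fixes E
  have hfix : ∀ z ∈ E, p' (p z) = z := by
    intro z hz
    rw [hp_fix z (hEle z hz), hp'_fix z hz]
  -- r maps into E
  have hrmem : ∀ z : Z, p' (p z) ∈ E := fun z => hp'_range (p z) (hp_range z)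
  -- E is closed, hence complete
  have hEclosed : IsClosed (E : Set Z) := by
    have hXcomp : CompleteSpace X := hXcl.completeSpace_coe
    set g : X →L[ℝ] Z := u.comp X.subtypeL with hg
    have hanti : AntilipschitzWith ⟨cu⁻¹, by positivity⟩ g := by
      apply g.antilipschitz_of_bound
      intro x
      have := hu (x : H)
      have h2 : ‖(x : H)‖ ≤ cu⁻¹ * ‖g x‖ := by
        rw [le_inv_mul_iff₀ hcu]
        simpa [hg] using this
      exact h2
    have hrange : Set.range g = (E : Set Z) := by
      ext z
      constructor
      · rintro ⟨x, rfl⟩; exact ⟨x, x.2, rfl⟩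
      · rintro ⟨x, hx, rfl⟩; exact ⟨⟨x, hx⟩, rfl⟩
    rw [← hrange]
    exact hanti.isClosed_range g.uniformContinuous
  have : CompleteSpace E := hEclosed.completeSpace_coe
  -- the restricted operator T = q ∘ pm on E
  set r : Z →L[ℝ] E := (p'.comp p).codRestrict E hrmem with hr
  have hr_apply : ∀ z : Z, (r z : Z) = p' (p z) := fun z => rfl
  have hr_fix : ∀ z : Z, ∀ hz : z ∈ E, r z = ⟨z, hz⟩ := by
    intro z hz
    apply Subtype.ext
    rw [hr_apply]
    exact hfix z hz
  set T : E →L[ℝ] E := r.comp (pm.comp E.subtypeL) with hT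
  have hT_apply : ∀ e : E, (T e : Z) = p' (p (pm e)) := fun e => rfl
  -- ‖1 - T‖ < 1
  have hnorm : ‖(1 : E →L[ℝ] E) - T‖ < 1 := by
    have hb : ∀ e : E, ‖((1 : E →L[ℝ] E) - T) e‖ ≤ ε * (C * ‖p‖) * ‖e‖ := by
      intro e
      have h1 : (((1 : E →L[ℝ] E) - T) e : Z) = p' (p ((e : Z) - pm e)) := by
        simp only [ContinuousLinearMap.sub_apply, ContinuousLinearMap.one_apply,
          Submodule.coe_sub, hT_apply, map_sub]
        rw [hfix (e : Z) e.2]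
      have h2 : ‖((1 : E →L[ℝ] E) - T) e‖ = ‖p' (p ((e : Z) - pm e))‖ := by
        rw [← h1]; rfl
      rw [h2]
      calc ‖p' (p ((e : Z) - pm e))‖ ≤ ‖p'‖ * ‖p ((e : Z) - pm e)‖ :=
            p'.le_opNorm _
        _ ≤ ‖p'‖ * (‖p‖ * ‖(e : Z) - pm e‖) :=
            mul_le_mul_of_nonneg_left (p.le_opNorm _) (norm_nonneg _)
        _ ≤ C * (‖p‖ * (ε * ‖e‖)) := by
            have h3 : ‖(e : Z) - pm e‖ ≤ ε * ‖e‖ := hsmall _ e.2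
            have h4 : ‖p‖ * ‖(e : Z) - pm e‖ ≤ ‖p‖ * (ε * ‖e‖) :=
              mul_le_mul_of_nonneg_left h3 (norm_nonneg _)
            exact mul_le_mul hp'_norm h4 (mul_nonneg (norm_nonneg _) (norm_nonneg _))
              hC.le
        _ = ε * (C * ‖p‖) * ‖e‖ := by ring
    have := ContinuousLinearMap.opNorm_le_bound _ (by positivity) hb
    exact lt_of_le_of_lt this hεsmall
  -- T is a unit
  set U : (E →L[ℝ] E)ˣ := Units.oneSub ((1 : E →L[ℝ] E) - T) hnorm with hU
  have hUval : (U : E →L[ℝ] E) = T := by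
    rw [hU, Units.val_oneSub, sub_sub_cancel]
  set S : E →L[ℝ] E := ↑U⁻¹ with hS
  have hST : ∀ e : E, S (T e) = e := by
    intro e
    have : S.comp T = 1 := by
      rw [← hUval, hS]
      exact U.inv_mul
    calc S (T e) = (S.comp T) e := rfl
      _ = e := by rw [this]; rfl
  have hTS : ∀ e : E, T (S e) = e := by
    intro e
    have : T.comp S = 1 := by
      rw [← hUval, hS]
      exact U.mul_inv
    calc T (S e) = (T.comp S) e := rfl
      _ = e := by rw [this]; rfl
  -- the inverse operator v
  refine ⟨E.subtypeL.comp (S.comp r), ?_, ?_, ?_, ?_, ?_, ?_⟩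
  case _ =>
    intro z hz
    have h1 : r (p' (p (pm z))) = T ⟨z, hz⟩ := by
      apply Subtype.ext
      rw [hr_apply, hT_apply]
      exact hfix _ (hrmem _)
    show (S (r (p' (p (pm z)))) : Z) = z
    rw [h1, hST]
  case _ =>
    intro z hz
    show p' (p (pm ((S (r z) : Z)))) = z
    rw [hr_fix z hz]
    have := hTS ⟨z, hz⟩
    calc p' (p (pm ((S ⟨z, hz⟩ : Z)))) = (T (S ⟨z, hz⟩) : Z) := rfl
      _ = z := by rw [this]
  case _ =>
    intro z _
    exact (S (r z)).2
  case _ =>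
    intro z
    -- let e = v (q z) ∈ E, then v(q(pm e)) = e
    set e : E := S (r (p' (p z))) with he
    show pm ((S (r (p' (p (pm (e : Z))))) : Z)) = pm (e : Z)
    congr 1
    have h1 : r (p' (p (pm (e : Z)))) = T e := by
      apply Subtype.ext
      rw [hr_apply, hT_apply]
      exact hfix _ (hrmem _)
    rw [h1, hST]
  case _ =>
    intro z
    exact ⟨_, (S (r (p' (p z)))).2, rfl⟩
  case _ =>
    rintro z ⟨w, hw, rfl⟩
    show pm ((S (r (p' (p (pm w)))) : Z)) = pm w
    congr 1
    have h1 : r (p' (p (pm w))) = T ⟨w, hw⟩ := by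
      apply Subtype.ext
      rw [hr_apply, hT_apply]
      exact hfix _ (hrmem _)
    rw [h1, hST]
end
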